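/- Let 1 ≤ k < n with BWT[k] = BWT[k+1]. Then SA[k] > 1, SA[k+1] > 1, and LF(k+1) = LF(k) + 1; equivalently, the suffixes T[SA[k]−1..n] and T[SA[k+1]−1..n] are lexicographically consecutive among the suffixes of T, with the former smaller. -/

import Mathlib

variable {α : Type*} [LinearOrder α]

/-- The suffix `T[p..n]` of a 1-indexed string `T[1..n]`, as a list. -/
def sfx (T : ℕ → α) (n p : ℕ) : List α :=
  (List.range (n + 1 - p)).map (fun d => T (p + d))

/-- The Burrows–Wheeler transform determined by the text `T`, its suffix array `SA`,
and the end-of-string character `dollar`:  `BWT[i] = T[SA[i]-1]` if `SA[i] > 1`,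
and `BWT[i] = $` if `SA[i] = 1`. -/
def bwt (T : ℕ → α) (SA : ℕ → ℕ) (dollar : α) (i : ℕ) : α :=
  if SA i = 1 then dollar else T (SA i - 1)

lemma sfx_cons (T : ℕ → α) {n p : ℕ} (hp : p ≤ n) :
    sfx T n p = T p :: sfx T n (p + 1) := by
  unfold sfx
  have h : n + 1 - p = (n + 1 - (p + 1)) + 1 := by omega
  rw [h, List.range_succ_eq_map, List.map_cons, List.map_map]
  simp only [add_zero]
  congr 1
  apply List.map_congr_left
  intro d _
  simp only [Function.comp_apply]
  congr 1
  omega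

lemma sfx_nil (T : ℕ → α) {n p : ℕ} (hp : n < p) : sfx T n p = [] := by
  unfold sfx
  have : n + 1 - p = 0 := by omega
  simp [this]

/-- If `BWT[k] = BWT[k+1]` (for `1 ≤ k < n`) then `SA[k] > 1`,
`SA[k+1] > 1`, and `LF(k+1) = LF(k) + 1`; i.e. the suffixes `T[SA[k]-1..n]` and
`T[SA[k+1]-1..n]` are lexicographically consecutive, the former smaller. -/
theorem statement4
    (n : ℕ) (T : ℕ → α) (dollar : α) (SA : ℕ → ℕ)
    -- `T[1..n]` is a string of length `n ≥ 1` ending with `$`,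
    -- which is smaller than every other character and occurs only at position `n`
    (hn : 1 ≤ n) (hTn : T n = dollar)
    (hdollar : ∀ p, 1 ≤ p → p < n → dollar < T p)
    -- `SA` is a permutation of `{1,...,n}` sorting the suffixes lexicographically
    (hSAran : ∀ i, 1 ≤ i → i ≤ n → 1 ≤ SA i ∧ SA i ≤ n)
    (hSAsurj : ∀ p, 1 ≤ p → p ≤ n → ∃ i, 1 ≤ i ∧ i ≤ n ∧ SA i = p)
    (hSAmono : ∀ i j, 1 ≤ i → i < j → j ≤ n → sfx T n (SA i) < sfx T n (SA j))
    -- `ISA` is the inverse permutation of `SA`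
    (ISA : ℕ → ℕ)
    (hISA : ∀ i, 1 ≤ i → i ≤ n → ISA (SA i) = i)
    (hISAran : ∀ p, 1 ≤ p → p ≤ n → 1 ≤ ISA p ∧ ISA p ≤ n ∧ SA (ISA p) = p)
    (k : ℕ) (hk1 : 1 ≤ k) (hk2 : k < n)
    (heq : bwt T SA dollar k = bwt T SA dollar (k + 1)) :
    1 < SA k ∧ 1 < SA (k + 1) ∧
    ISA (SA (k + 1) - 1) = ISA (SA k - 1) + 1 := by
  obtain ⟨ha1, ha2⟩ := hSAran k hk1 (le_of_lt hk2)
  obtain ⟨hb1, hb2⟩ := hSAran (k + 1) (by omega) (by omega)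
  have hmain : sfx T n (SA k) < sfx T n (SA (k + 1)) :=
    hSAmono k (k + 1) hk1 (Nat.lt_succ_self k) (by omega)
  have hab : SA k ≠ SA (k + 1) := by
    intro h
    rw [h] at hmain
    exact lt_irrefl _ hmain
  -- SA k > 1
  have hSAk : 1 < SA k := by
    rcases Nat.lt_or_ge 1 (SA k) with h | h
    · exact h
    · exfalso
      have hak : SA k = 1 := by omega
      have hbk : SA (k + 1) ≠ 1 := fun h' => hab (by omega)
      unfold bwt at heq
      rw [if_pos hak, if_neg hbk] at heq
      have h1 : 1 ≤ SA (k + 1) - 1 := by omega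
      have h2 : SA (k + 1) - 1 < n := by omega
      exact lt_irrefl dollar (heq ▸ hdollar _ h1 h2)
  have hSAk1 : 1 < SA (k + 1) := by
    rcases Nat.lt_or_ge 1 (SA (k + 1)) with h | h
    · exact h
    · exfalso
      have hbk : SA (k + 1) = 1 := by omega
      have hak : SA k ≠ 1 := by omega
      unfold bwt at heq
      rw [if_pos hbk, if_neg hak] at heq
      have h1 : 1 ≤ SA k - 1 := by omega
      have h2 : SA k - 1 < n := by omega
      exact lt_irrefl dollar (heq ▸ hdollar _ h1 h2)
  refine ⟨hSAk, hSAk1, ?_⟩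
  -- the common character
  have hc : T (SA k - 1) = T (SA (k + 1) - 1) := by
    unfold bwt at heq
    rwa [if_neg (by omega), if_neg (by omega)] at heq
  set c := T (SA k - 1) with hcdef
  -- i < j from suffix comparison
  have key : ∀ i j, 1 ≤ i → i ≤ n → 1 ≤ j → j ≤ n →
      sfx T n (SA i) < sfx T n (SA j) → i < j := by
    intro i j hi1 hi2 hj1 hj2 h
    rcases lt_trichotomy i j with h' | h' | h'
    · exact h'
    · subst h'; exact absurd h (lt_irrefl _)
    · exact absurd (hSAmono j i hj1 h' hi2) (lt_asymm h)
  obtain ⟨hi1, hi2, hiSA⟩ := hISAran (SA k - 1) (by omega) (by omega)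
  obtain ⟨hj1, hj2, hjSA⟩ := hISAran (SA (k + 1) - 1) (by omega) (by omega)
  set i := ISA (SA k - 1)
  set j := ISA (SA (k + 1) - 1)
  have hconsA : sfx T n (SA k - 1) = c :: sfx T n (SA k) := by
    rw [sfx_cons T (by omega : SA k - 1 ≤ n)]
    congr 2
    omega
  have hconsB : sfx T n (SA (k + 1) - 1) = c :: sfx T n (SA (k + 1)) := by
    rw [sfx_cons T (by omega : SA (k + 1) - 1 ≤ n), ← hc]
    congr 2
    omega
  have hij : i < j := by
    apply key i j hi1 hi2 hj1 hj2
    rw [hiSA, hjSA, hconsA, hconsB]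
    exact List.cons_lt_cons_self.mpr hmain
  by_contra hne
  have hijlt : i + 1 < j := by omega
  set m := i + 1 with hm
  obtain ⟨hq1, hq2⟩ := hSAran m (by omega) (by omega)
  set q := SA m with hq
  have h2 : sfx T n (SA k - 1) < sfx T n q :=
    hiSA ▸ hSAmono i m hi1 (Nat.lt_succ_self i) (by omega)
  have h3 : sfx T n q < sfx T n (SA (k + 1) - 1) :=
    hjSA ▸ hSAmono m j (by omega) hijlt hj2
  have hqcons : sfx T n q = T q :: sfx T n (q + 1) := sfx_cons T hq2
  have hTq : T q = c := by
    have hle1 : c ≤ T q := List.head_le_of_lt (by rw [← hqcons, ← hconsA]; exact h2)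
    have hle2 : T q ≤ c := List.head_le_of_lt (by rw [← hqcons, ← hconsB]; exact h3)
    exact le_antisymm hle2 hle1
  rw [hqcons, hTq, hconsA] at h2
  rw [hqcons, hTq, hconsB] at h3
  have h2' : sfx T n (SA k) < sfx T n (q + 1) := List.cons_lt_cons_self.mp h2
  have h3' : sfx T n (q + 1) < sfx T n (SA (k + 1)) := List.cons_lt_cons_self.mp h3
  have hqn : q < n := by
    rcases Nat.lt_or_ge q n with h | h
    · exact h
    · exfalso
      have : sfx T n (q + 1) = [] := sfx_nil T (by omega)
      rw [this, sfx_cons T (by omega : SA k ≤ n)] at h2'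
      exact List.not_lt_nil _ h2'
  obtain ⟨hm1, hm2, hmSA⟩ := hISAran (q + 1) (by omega) (by omega)
  set m' := ISA (q + 1)
  have hkm : k < m' := key k m' hk1 (by omega) hm1 hm2 (by rw [hmSA]; exact h2')
  have hmk : m' < k + 1 := key m' (k + 1) hm1 hm2 (by omega) (by omega)
    (by rw [hmSA]; exact h3')
  omega
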